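/- arXiv:0801.3294 — 2 statements merged into one kernel-verified Lean document; each statement's English description precedes it below -/
import Mathlib

section
/- Every Smale space (X, d, φ) whose underlying space X is totally disconnected is topologically conjugate to (Σ_G, σ) for some finite directed graph G; that is, there is a homeomorphism h : X → Σ_G with h ∘ φ = σ ∘ h. -/
open Filter Topology Set

/-- A Smale space structure on a compact metric space. -/
structure SmaleSpace (X : Type) [MetricSpace X] : Type where
  compact : CompactSpace X
  phi : X ≃ₜ X
  eps : ℝ
  eps_pos : 0 < eps
  lam : ℝ
  lam_pos : 0 < lam
  lam_lt_one : lam < 1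
  bracket : X → X → X
  bracket_cont : ContinuousOn (fun p : X × X => bracket p.1 p.2) {p | dist p.1 p.2 ≤ eps}
  bracket_self : ∀ x, bracket x x = x
  bracket_eq₁ : ∀ x y z, dist x y ≤ eps → dist y z ≤ eps → dist x z ≤ eps →
    bracket x (bracket y z) = bracket x z
  bracket_eq₂ : ∀ x y z, dist x y ≤ eps → dist y z ≤ eps → dist x z ≤ eps →
    bracket (bracket x y) z = bracket x z
  bracket_phi : ∀ x y, dist x y ≤ eps → dist (phi x) (phi y) ≤ eps →
    phi (bracket x y) = bracket (phi x) (phi y)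
  contract_s : ∀ x y z, dist x y ≤ eps → bracket x y = y → dist x z ≤ eps → bracket x z = z →
    dist (phi y) (phi z) ≤ lam * dist y z
  contract_u : ∀ x y z, dist x y ≤ eps → bracket y x = y → dist x z ≤ eps → bracket z x = z →
    dist (phi.symm y) (phi.symm z) ≤ lam * dist y z

namespace SmaleSpace

variable {X : Type} [MetricSpace X]

/-- The local stable set `X^s(x, ε)`. -/
def locStable (S : SmaleSpace X) (x : X) (ε : ℝ) : Set X :=
  {y | dist x y ≤ ε ∧ S.bracket x y = y}

/-- The local unstable set `X^u(x, ε)`. -/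
def locUnstable (S : SmaleSpace X) (x : X) (ε : ℝ) : Set X :=
  {y | dist x y ≤ ε ∧ S.bracket y x = y}

end SmaleSpace

namespace SmaleSpace
variable {X : Type} [MetricSpace X] (S : SmaleSpace X)

/-- iterate over ℤ -/
noncomputable def zit (k : ℤ) (x : X) : X := (S.phi.toEquiv ^ k) x

lemma zit_zero (x : X) : S.zit 0 x = x := rfl

lemma zit_add (a b : ℤ) (x : X) : S.zit (a + b) x = S.zit a (S.zit b x) := by
  simp [zit, zpow_add, Equiv.Perm.mul_apply]

lemma zit_one (x : X) : S.zit 1 x = S.phi x := by simp [zit]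

lemma zit_neg_one (x : X) : S.zit (-1) x = S.phi.symm x := by
  simp only [zit, zpow_neg, zpow_one]
  rfl

lemma zit_natCast (n : ℕ) (x : X) : S.zit n x = (⇑S.phi)^[n] x := by
  induction n generalizing x with
  | zero => simp [zit]
  | succ n ih =>
    have h : ((n+1 : ℕ) : ℤ) = (n : ℤ) + 1 := by push_cast; ring
    rw [h, zit_add, zit_one, ih, Function.iterate_succ_apply]

lemma zit_neg_natCast (n : ℕ) (x : X) : S.zit (-n) x = (⇑S.phi.symm)^[n] x := by
  induction n generalizing x with
  | zero => simp [zit]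
  | succ n ih =>
    have h : (-((n+1 : ℕ) : ℤ)) = (-(n : ℤ)) + (-1) := by push_cast; ring
    rw [h, zit_add, zit_neg_one, ih, Function.iterate_succ_apply]


lemma zit_phi (a : ℤ) (x : X) : S.zit a (S.phi x) = S.zit (a + 1) x := by
  rw [S.zit_add a 1, S.zit_one]

lemma continuous_zit (k : ℤ) : Continuous (S.zit k) := by
  obtain ⟨n, rfl | rfl⟩ := k.eq_nat_or_neg
  · simpa [funext (S.zit_natCast n)] using S.phi.continuous.iterate n
  · simpa [funext (S.zit_neg_natCast n)] using S.phi.symm.continuous.iterate n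

lemma lam_nonneg : 0 ≤ S.lam := S.lam_pos.le

lemma pow_lam_le_one (n : ℕ) : S.lam ^ n ≤ 1 :=
  pow_le_one₀ S.lam_nonneg S.lam_lt_one.le

/-- convergence helper -/
lemma eq_of_dist_le_pow {p q : X} {c : ℝ} (h : ∀ n : ℕ, dist p q ≤ S.lam ^ n * c) : p = q := by
  have ht : Tendsto (fun n : ℕ => S.lam ^ n * c) atTop (𝓝 (0 * c)) :=
    (tendsto_pow_atTop_nhds_zero_of_lt_one (by
      have := S.lam_pos; linarith) S.lam_lt_one).mul_const c
  rw [zero_mul] at ht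
  have : dist p q ≤ 0 := ge_of_tendsto ht (Eventually.of_forall h)
  exact dist_le_zero.mp this

/-- uniform continuity of phi -/
lemma unif_phi : ∀ ε > (0:ℝ), ∃ δ > (0:ℝ), ∀ x y : X, dist x y ≤ δ →
    dist (S.phi x) (S.phi y) ≤ ε := by
  haveI := S.compact
  intro ε hε
  have h := CompactSpace.uniformContinuous_of_continuous (α := X) S.phi.continuous
  rw [Metric.uniformContinuous_iff] at h
  obtain ⟨δ, hδ, hd⟩ := h ε hε
  exact ⟨δ/2, by linarith, fun x y hxy => (hd (lt_of_le_of_lt hxy (by linarith))).le⟩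

lemma unif_symm : ∀ ε > (0:ℝ), ∃ δ > (0:ℝ), ∀ x y : X, dist x y ≤ δ →
    dist (S.phi.symm x) (S.phi.symm y) ≤ ε := by
  haveI := S.compact
  intro ε hε
  have h := CompactSpace.uniformContinuous_of_continuous (α := X) S.phi.symm.continuous
  rw [Metric.uniformContinuous_iff] at h
  obtain ⟨δ, hδ, hd⟩ := h ε hε
  exact ⟨δ/2, by linarith, fun x y hxy => (hd (lt_of_le_of_lt hxy (by linarith))).le⟩

/-- bracket modulus -/
lemma bracket_mod : ∀ α > (0:ℝ), ∃ γ > (0:ℝ), γ ≤ S.eps ∧ ∀ x y : X, dist x y ≤ γ →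
    dist (S.bracket x y) x ≤ α ∧ dist (S.bracket x y) y ≤ α := by
  haveI := S.compact
  intro α hα
  have hK : IsCompact {p : X × X | dist p.1 p.2 ≤ S.eps} :=
    (isClosed_le (by fun_prop) continuous_const).isCompact
  have h := hK.uniformContinuousOn_of_continuous S.bracket_cont
  rw [Metric.uniformContinuousOn_iff_le] at h
  obtain ⟨δ, hδ, hd⟩ := h (α/2) (by linarith)
  refine ⟨min (min δ S.eps) (α/2), lt_min (lt_min hδ S.eps_pos) (by linarith), (min_le_left _ _).trans (min_le_right _ _),
    fun x y hxy => ?_⟩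
  have h1 : dist x y ≤ δ := hxy.trans ((min_le_left _ _).trans (min_le_left _ _))
  have h2 : dist x y ≤ S.eps := hxy.trans ((min_le_left _ _).trans (min_le_right _ _))
  have h3 : dist x y ≤ α/2 := hxy.trans (min_le_right _ _)
  have hm : ((x, y) : X × X) ∈ {p : X × X | dist p.1 p.2 ≤ S.eps} := h2
  have hm' : ((x, x) : X × X) ∈ {p : X × X | dist p.1 p.2 ≤ S.eps} := by
    simp [Set.mem_setOf_eq, S.eps_pos.le]
  have hdist : dist ((x,y) : X × X) (x,x) ≤ δ := by
    rw [Prod.dist_eq]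
    simp only [dist_self]
    rw [max_le_iff]
    exact ⟨by positivity, (dist_comm y x ▸ h1)⟩
  have := hd _ hm _ hm' hdist
  simp only [S.bracket_self] at this
  constructor
  · linarith
  · calc dist (S.bracket x y) y ≤ dist (S.bracket x y) x + dist x y := dist_triangle _ _ _
      _ ≤ α/2 + α/2 := by linarith
      _ = α := by ring

/-- stable iteration -/
lemma stable_iter {x y : X} (hd : dist x y ≤ S.eps) (hb : S.bracket x y = y) (n : ℕ) :
    S.bracket ((⇑S.phi)^[n] x) ((⇑S.phi)^[n] y) = (⇑S.phi)^[n] y ∧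
    dist ((⇑S.phi)^[n] x) ((⇑S.phi)^[n] y) ≤ S.lam ^ n * dist x y := by
  induction n with
  | zero => simpa using hb
  | succ n ih =>
    obtain ⟨hbn, hdn⟩ := ih
    have hle1 : dist ((⇑S.phi)^[n] x) ((⇑S.phi)^[n] y) ≤ S.eps := by
      have := S.pow_lam_le_one n
      nlinarith [dist_nonneg (x := x) (y := y), S.eps_pos]
    have hc := S.contract_s ((⇑S.phi)^[n] x) ((⇑S.phi)^[n] x) ((⇑S.phi)^[n] y)
      (by simpa using S.eps_pos.le) (S.bracket_self _) hle1 hbn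
    have hle2 : dist (S.phi ((⇑S.phi)^[n] x)) (S.phi ((⇑S.phi)^[n] y)) ≤ S.eps := by
      nlinarith [S.lam_pos, S.lam_lt_one, dist_nonneg (x := (⇑S.phi)^[n] x) (y := (⇑S.phi)^[n] y)]
    have hbp := S.bracket_phi _ _ hle1 hle2
    rw [hbn] at hbp
    constructor
    · rw [Function.iterate_succ_apply', Function.iterate_succ_apply', ← hbp]
    · rw [Function.iterate_succ_apply', Function.iterate_succ_apply']
      calc dist (S.phi ((⇑S.phi)^[n] x)) (S.phi ((⇑S.phi)^[n] y))
          ≤ S.lam * dist ((⇑S.phi)^[n] x) ((⇑S.phi)^[n] y) := hc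
        _ ≤ S.lam * (S.lam ^ n * dist x y) := by
            have := S.lam_pos; nlinarith
        _ = S.lam ^ (n+1) * dist x y := by ring

/-- unstable iteration -/
lemma unstable_iter {x y : X} (hd : dist x y ≤ S.eps) (hb : S.bracket y x = y) (n : ℕ) :
    S.bracket ((⇑S.phi.symm)^[n] y) ((⇑S.phi.symm)^[n] x) = (⇑S.phi.symm)^[n] y ∧
    dist ((⇑S.phi.symm)^[n] x) ((⇑S.phi.symm)^[n] y) ≤ S.lam ^ n * dist x y := by
  induction n with
  | zero => simpa using hb
  | succ n ih =>
    obtain ⟨hbn, hdn⟩ := ih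
    set a := (⇑S.phi.symm)^[n] x
    set b := (⇑S.phi.symm)^[n] y
    have hle1 : dist a b ≤ S.eps := by
      have := S.pow_lam_le_one n
      nlinarith [dist_nonneg (x := x) (y := y), S.eps_pos]
    have hc := S.contract_u a a b (by simpa using S.eps_pos.le) (S.bracket_self _) hle1 hbn
    have hle2 : dist (S.phi.symm a) (S.phi.symm b) ≤ S.eps := by
      nlinarith [S.lam_pos, S.lam_lt_one, dist_nonneg (x := a) (y := b)]
    have hd2 : dist (S.phi.symm b) (S.phi.symm a) ≤ S.eps := by rwa [dist_comm]
    have hbp := S.bracket_phi (S.phi.symm b) (S.phi.symm a) hd2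
      (by simpa using (dist_comm a b ▸ hle1))
    simp only [Homeomorph.apply_symm_apply] at hbp
    rw [hbn] at hbp
    have hinj : S.bracket (S.phi.symm b) (S.phi.symm a) = S.phi.symm b :=
      S.phi.injective (by rw [hbp, Homeomorph.apply_symm_apply])
    constructor
    · rw [Function.iterate_succ_apply', Function.iterate_succ_apply']
      exact hinj
    · rw [Function.iterate_succ_apply', Function.iterate_succ_apply']
      calc dist (S.phi.symm a) (S.phi.symm b) ≤ S.lam * dist a b := hc
        _ ≤ S.lam * (S.lam ^ n * dist x y) := by have := S.lam_pos; nlinarith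
        _ = S.lam ^ (n+1) * dist x y := by ring

lemma expansive : ∃ δ₀ > (0:ℝ), δ₀ ≤ S.eps ∧ ∀ x y : X,
    (∀ n : ℕ, dist ((⇑S.phi)^[n] x) ((⇑S.phi)^[n] y) ≤ δ₀ ∧
      dist ((⇑S.phi.symm)^[n] x) ((⇑S.phi.symm)^[n] y) ≤ δ₀) → x = y := by
  obtain ⟨γ, hγ, hγe, hmod⟩ := S.bracket_mod S.eps S.eps_pos
  refine ⟨γ, hγ, hγe, fun x y h => ?_⟩
  set z := S.bracket x y with hz
  have hF : ∀ n : ℕ, S.bracket ((⇑S.phi)^[n] x) ((⇑S.phi)^[n] y) = (⇑S.phi)^[n] z := by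
    intro n; induction n with
    | zero => simp [hz]
    | succ n ih =>
      have h1 : dist ((⇑S.phi)^[n] x) ((⇑S.phi)^[n] y) ≤ S.eps := (h n).1.trans hγe
      have h2 : dist ((⇑S.phi)^[n+1] x) ((⇑S.phi)^[n+1] y) ≤ S.eps := (h (n+1)).1.trans hγe
      simp only [Function.iterate_succ_apply'] at h2 ⊢
      rw [← S.bracket_phi _ _ h1 h2, ih]
  have hB : ∀ n : ℕ, S.bracket ((⇑S.phi.symm)^[n] x) ((⇑S.phi.symm)^[n] y)
      = (⇑S.phi.symm)^[n] z := by
    intro n; induction n with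
    | zero => simp [hz]
    | succ n ih =>
      have h1 : dist ((⇑S.phi.symm)^[n+1] x) ((⇑S.phi.symm)^[n+1] y) ≤ S.eps :=
        (h (n+1)).2.trans hγe
      have h2 : dist ((⇑S.phi.symm)^[n] x) ((⇑S.phi.symm)^[n] y) ≤ S.eps := (h n).2.trans hγe
      have e1 : S.phi ((⇑S.phi.symm)^[n+1] x) = (⇑S.phi.symm)^[n] x := by
        rw [Function.iterate_succ_apply', Homeomorph.apply_symm_apply]
      have e2 : S.phi ((⇑S.phi.symm)^[n+1] y) = (⇑S.phi.symm)^[n] y := by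
        rw [Function.iterate_succ_apply', Homeomorph.apply_symm_apply]
      apply S.phi.injective
      rw [S.bracket_phi _ _ h1 (by rw [e1, e2]; exact h2), e1, e2, ih,
        Function.iterate_succ_apply', Homeomorph.apply_symm_apply]
  have hiterF : ∀ (n : ℕ) (w : X), (⇑S.phi)^[n] ((⇑S.phi.symm)^[n] w) = w :=
    fun n w => Function.LeftInverse.iterate (fun u => S.phi.apply_symm_apply u) n w
  have hiterB : ∀ (n : ℕ) (w : X), (⇑S.phi.symm)^[n] ((⇑S.phi)^[n] w) = w :=
    fun n w => Function.LeftInverse.iterate (fun u => S.phi.symm_apply_apply u) n w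
  have hzx : x = z := by
    apply S.eq_of_dist_le_pow (c := S.eps)
    intro n
    set a := (⇑S.phi.symm)^[n] x with ha
    set b := (⇑S.phi.symm)^[n] y with hbb
    have hab : dist a b ≤ γ := (h n).2
    have hcz : S.bracket a b = (⇑S.phi.symm)^[n] z := hB n
    have hmS : S.bracket a ((⇑S.phi.symm)^[n] z) = (⇑S.phi.symm)^[n] z := by
      rw [← hcz]
      exact S.bracket_eq₁ a a b (by simpa using S.eps_pos.le) (hab.trans hγe) (hab.trans hγe)
    have hdS : dist a ((⇑S.phi.symm)^[n] z) ≤ S.eps := by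
      rw [← hcz, dist_comm]; exact (hmod a b hab).1
    have hst := (S.stable_iter hdS hmS n).2
    rw [hiterF n x, hiterF n z] at hst
    calc dist x z ≤ S.lam ^ n * dist a ((⇑S.phi.symm)^[n] z) := hst
      _ ≤ S.lam ^ n * S.eps := by
          have := pow_nonneg S.lam_nonneg n; nlinarith
  have hzy : y = z := by
    apply S.eq_of_dist_le_pow (c := S.eps)
    intro n
    set a := (⇑S.phi)^[n] x with ha
    set b := (⇑S.phi)^[n] y with hbb
    have hab : dist a b ≤ γ := (h n).1
    have hcz : S.bracket a b = (⇑S.phi)^[n] z := hF n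
    have hmU : S.bracket ((⇑S.phi)^[n] z) b = (⇑S.phi)^[n] z := by
      rw [← hcz]
      exact S.bracket_eq₂ a b b (hab.trans hγe) (by simpa using S.eps_pos.le) (hab.trans hγe)
    have hdU : dist b ((⇑S.phi)^[n] z) ≤ S.eps := by
      rw [← hcz, dist_comm]; exact (hmod a b hab).2
    have hst := (S.unstable_iter hdU hmU n).2
    rw [hiterB n y, hiterB n z] at hst
    calc dist y z ≤ S.lam ^ n * dist b ((⇑S.phi)^[n] z) := hst
      _ ≤ S.lam ^ n * S.eps := by
          have := pow_nonneg S.lam_nonneg n; nlinarith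
  rw [hzx, hzy]

lemma unif_expansive {δ₀ : ℝ}
    (hexp : ∀ x y : X, (∀ n : ℕ, dist ((⇑S.phi)^[n] x) ((⇑S.phi)^[n] y) ≤ δ₀ ∧
      dist ((⇑S.phi.symm)^[n] x) ((⇑S.phi.symm)^[n] y) ≤ δ₀) → x = y) :
    ∀ ρ > (0:ℝ), ∃ N : ℕ, ∀ x y : X,
      (∀ n ≤ N, dist ((⇑S.phi)^[n] x) ((⇑S.phi)^[n] y) ≤ δ₀ ∧
        dist ((⇑S.phi.symm)^[n] x) ((⇑S.phi.symm)^[n] y) ≤ δ₀) → dist x y ≤ ρ := by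
  haveI := S.compact
  intro ρ hρ
  by_contra hcon
  push_neg at hcon
  choose u v hw hd using hcon
  obtain ⟨p, -, ψ, hψ, hlim⟩ := IsCompact.tendsto_subseq (s := (univ : Set (X × X)))
    (x := fun N => (u N, v N)) isCompact_univ (fun n => mem_univ _)
  have hpq : p.1 = p.2 := by
    apply hexp
    intro n
    have hcI : Continuous ((⇑S.phi)^[n]) := S.phi.continuous.iterate n
    have hcI' : Continuous ((⇑S.phi.symm)^[n]) := S.phi.symm.continuous.iterate n
    constructor
    · have hct : Tendsto (fun i => dist ((⇑S.phi)^[n] (u (ψ i))) ((⇑S.phi)^[n] (v (ψ i))))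
        atTop (𝓝 (dist ((⇑S.phi)^[n] p.1) ((⇑S.phi)^[n] p.2))) := by
        have : Continuous (fun q : X × X => dist ((⇑S.phi)^[n] q.1) ((⇑S.phi)^[n] q.2)) :=
          (hcI.comp continuous_fst).dist (hcI.comp continuous_snd)
        exact (this.tendsto p).comp hlim
      refine le_of_tendsto hct ?_
      filter_upwards [eventually_ge_atTop n] with i hi
      exact (hw (ψ i) n (hi.trans (hψ.le_apply))).1
    · have hct : Tendsto (fun i => dist ((⇑S.phi.symm)^[n] (u (ψ i))) ((⇑S.phi.symm)^[n] (v (ψ i))))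
        atTop (𝓝 (dist ((⇑S.phi.symm)^[n] p.1) ((⇑S.phi.symm)^[n] p.2))) := by
        have : Continuous (fun q : X × X => dist ((⇑S.phi.symm)^[n] q.1) ((⇑S.phi.symm)^[n] q.2)) :=
          (hcI'.comp continuous_fst).dist (hcI'.comp continuous_snd)
        exact (this.tendsto p).comp hlim
      refine le_of_tendsto hct ?_
      filter_upwards [eventually_ge_atTop n] with i hi
      exact (hw (ψ i) n (hi.trans (hψ.le_apply))).2
  have hct : Tendsto (fun i => dist (u (ψ i)) (v (ψ i))) atTop (𝓝 (dist p.1 p.2)) := by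
    have : Continuous (fun q : X × X => dist q.1 q.2) := continuous_fst.dist continuous_snd
    exact (this.tendsto p).comp hlim
  have : ρ ≤ dist p.1 p.2 :=
    ge_of_tendsto hct (Eventually.of_forall fun i => (hd (ψ i)).le)
  rw [hpq, dist_self] at this
  linarith

lemma symm_iter_mod (N : ℕ) : ∀ η > (0:ℝ), ∃ γ > (0:ℝ), ∀ a b : X, dist a b ≤ γ →
    ∀ j ≤ N, dist ((⇑S.phi.symm)^[j] a) ((⇑S.phi.symm)^[j] b) ≤ η := by
  induction N with
  | zero =>
    intro η hη
    exact ⟨η, hη, fun a b hab j hj => by interval_cases j; simpa⟩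
  | succ N ih =>
    intro η hη
    obtain ⟨γN, hγN, hN⟩ := ih η hη
    obtain ⟨γ, hγ, hs⟩ := S.unif_symm γN hγN
    refine ⟨min γ η, lt_min hγ hη, fun a b hab j hj => ?_⟩
    cases j with
    | zero => simpa using hab.trans (min_le_right _ _)
    | succ j =>
      rw [Function.iterate_succ_apply, Function.iterate_succ_apply]
      exact hN _ _ (hs a b (hab.trans (min_le_left _ _))) j (by omega)

lemma pseudo_track (N : ℕ) : ∀ η > (0:ℝ), ∃ δ > (0:ℝ), ∀ z : ℤ → X,
    (∀ k : ℤ, dist (S.phi (z k)) (z (k+1)) ≤ δ) →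
    ∀ j : ℕ, j ≤ N → ∀ k : ℤ, dist ((⇑S.phi.symm)^[j] (z k)) (z (k - j)) ≤ η := by
  intro η hη
  have hη' : (0:ℝ) < η / (N+1) := by positivity
  obtain ⟨γa, hγa, hA⟩ := S.symm_iter_mod N (η/(N+1)) hη'
  obtain ⟨δ, hδ, hs⟩ := S.unif_symm γa hγa
  refine ⟨δ, hδ, fun z hz => ?_⟩
  have key : ∀ j : ℕ, j ≤ N → ∀ k : ℤ, dist ((⇑S.phi.symm)^[j] (z k)) (z (k - j))
      ≤ j * (η/(N+1)) := by
    intro j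
    induction j with
    | zero => intro _ k; simp
    | succ j ihj =>
      intro hj k
      have h1 : dist (S.phi.symm (z k)) (z (k-1)) ≤ γa := by
        have hjump := hz (k-1)
        rw [show k - 1 + 1 = k by ring] at hjump
        have e : S.phi.symm (S.phi (z (k-1))) = z (k-1) := S.phi.symm_apply_apply _
        calc dist (S.phi.symm (z k)) (z (k-1))
            = dist (S.phi.symm (z k)) (S.phi.symm (S.phi (z (k-1)))) := by rw [e]
          _ ≤ γa := by
              rw [dist_comm]
              exact hs _ _ hjump
      rw [Function.iterate_succ_apply]
      have hterm := hA _ _ h1 j (by omega)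
      have hrec := ihj (by omega) (k-1)
      rw [show k - 1 - (j:ℤ) = k - ((j:ℕ)+1 : ℕ) by push_cast; ring] at hrec
      calc dist ((⇑S.phi.symm)^[j] (S.phi.symm (z k))) (z (k - ((j:ℕ)+1:ℕ)))
          ≤ dist ((⇑S.phi.symm)^[j] (S.phi.symm (z k))) ((⇑S.phi.symm)^[j] (z (k-1)))
            + dist ((⇑S.phi.symm)^[j] (z (k-1))) (z (k - ((j:ℕ)+1:ℕ))) := dist_triangle _ _ _
        _ ≤ η/(N+1) + j * (η/(N+1)) := add_le_add hterm hrec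
        _ = (((j+1:ℕ)):ℝ) * (η/(N+1)) := by push_cast; ring
  intro j hj k
  refine (key j hj k).trans ?_
  have hjN : (j:ℝ) ≤ N := by exact_mod_cast hj
  calc (j:ℝ) * (η/(N+1)) ≤ ((N:ℝ)+1) * (η/(N+1)) := by
        apply mul_le_mul_of_nonneg_right (by linarith) (le_of_lt (by positivity))
    _ = η := by field_simp

lemma shadowing {δ₀ : ℝ} (hδ₀ : 0 < δ₀) (hδ₀e : δ₀ ≤ S.eps)
    (hexp : ∀ x y : X, (∀ n : ℕ, dist ((⇑S.phi)^[n] x) ((⇑S.phi)^[n] y) ≤ δ₀ ∧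
      dist ((⇑S.phi.symm)^[n] x) ((⇑S.phi.symm)^[n] y) ≤ δ₀) → x = y) :
    ∀ β > (0:ℝ), ∃ δ > (0:ℝ), ∀ z : ℤ → X,
      (∀ k : ℤ, dist (S.phi (z k)) (z (k+1)) ≤ δ) →
      ∃ x : X, ∀ k : ℤ, dist (S.zit k x) (z k) ≤ β := by
  haveI := S.compact
  intro β hβ
  have hlam0 := S.lam_nonneg
  have hlam1 : 0 < 1 - S.lam := by have := S.lam_lt_one; linarith
  set M := min β δ₀ with hM
  have hMpos : 0 < M := lt_min hβ hδ₀
  set b := (1 - S.lam) * M / 4 with hbdef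
  have hbpos : 0 < b := by positivity
  have hbB : b / (1 - S.lam) = M / 4 := by field_simp [hbdef]; ring
  have hbδ₀ : b ≤ δ₀ := by
    have h1 : M ≤ δ₀ := min_le_right _ _
    nlinarith
  have hbeps : b ≤ S.eps := hbδ₀.trans hδ₀e
  set η := M / 4 with hηdef
  have hηpos : 0 < η := by positivity
  set B := M / 4 with hBdef
  obtain ⟨γb, hγb, hγbe, hmod⟩ := S.bracket_mod b hbpos
  obtain ⟨t, ht, hphi⟩ := S.unif_phi (γb/2) (by linarith)
  obtain ⟨N, hNwin⟩ := S.unif_expansive hexp t ht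
  obtain ⟨δ7, hδ7, htrack⟩ := S.pseudo_track N η hηpos
  refine ⟨min (γb/2) δ7, lt_min (by linarith) hδ7, fun z hz => ?_⟩
  have hzjump : ∀ k : ℤ, dist (S.phi (z k)) (z (k+1)) ≤ γb/2 :=
    fun k => (hz k).trans (min_le_left _ _)
  have hztrack : ∀ j : ℕ, j ≤ N → ∀ k : ℤ,
      dist ((⇑S.phi.symm)^[j] (z k)) (z (k - j)) ≤ η :=
    htrack z (fun k => (hz k).trans (min_le_right _ _))
  -- geometric bound sequence
  set c : ℕ → ℝ := fun j => η + b * (1 - S.lam^(j+1)) / (1 - S.lam) with hcdef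
  have hcle : ∀ j, c j ≤ η + B := by
    intro j
    have h1 : 0 ≤ S.lam ^ (j+1) := pow_nonneg hlam0 _
    have h2 : b * (1 - S.lam^(j+1)) / (1 - S.lam) ≤ b / (1 - S.lam) :=
      (div_le_div_iff_of_pos_right hlam1).mpr (by nlinarith)
    rw [hbB] at h2
    simp only [hcdef]
    linarith
  have hηc : ∀ j, η ≤ c j := by
    intro j
    have h1 : S.lam ^ (j+1) ≤ 1 := S.pow_lam_le_one _
    have : 0 ≤ b * (1 - S.lam^(j+1)) / (1 - S.lam) := by
      apply div_nonneg ?_ hlam1.le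
      nlinarith
    simp only [hcdef]; linarith
  have hc0 : c 0 = η + b := by
    simp only [hcdef, pow_one]
    field_simp
    ring
  have hcstep : ∀ j, S.lam^(j+1) * b + c j = c (j+1) := by
    intro j
    simp only [hcdef]
    field_simp
    ring
  -- the main finite-window construction
  have main : ∀ m : ℕ, ∃ xm : X, ∀ k : ℤ, -(m:ℤ) ≤ k → k ≤ m →
      dist (S.zit k xm) (z k) ≤ η + B := by
    intro m
    set w : ℕ → X := fun n => Nat.rec (z (-(m:ℤ)))
      (fun n wn => S.bracket (z (-(m:ℤ) + n + 1)) (S.phi wn)) n with hwdef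
    have hwsucc : ∀ n : ℕ, w (n+1) = S.bracket (z (-(m:ℤ) + n + 1)) (S.phi (w n)) :=
      fun n => rfl
    have INV : ∀ n : ℕ, dist (w n) (z (-(m:ℤ) + n)) ≤ t ∧ ∀ j : ℕ, j ≤ n + N →
        dist ((⇑S.phi.symm)^[j] (w n)) (z (-(m:ℤ) + n - j)) ≤ c j := by
      intro n
      induction n with
      | zero =>
        constructor
        · simp [hwdef]; exact ht.le
        · intro j hj
          have := hztrack j (by omega) (-(m:ℤ))
          simp only [hwdef]
          convert (this.trans (hηc j)) using 3 <;> push_cast <;> first | rfl | ring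
      | succ n ih =>
        obtain ⟨hwz, hAUX⟩ := ih
        set k0 : ℤ := -(m:ℤ) + n with hk0
        have hek : -(m:ℤ) + ((n:ℕ)+1:ℕ) = k0 + 1 := by push_cast; ring
        have hin : dist (z (k0+1)) (S.phi (w n)) ≤ γb := by
          calc dist (z (k0+1)) (S.phi (w n))
              ≤ dist (z (k0+1)) (S.phi (z k0)) + dist (S.phi (z k0)) (S.phi (w n)) :=
                dist_triangle _ _ _
            _ ≤ γb/2 + γb/2 := by
                apply add_le_add
                · rw [dist_comm]; exact hzjump k0
                · exact hphi _ _ (by rw [dist_comm]; exact hwz)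
            _ = γb := by ring
        have hw1 : w (n+1) = S.bracket (z (k0+1)) (S.phi (w n)) := by
          rw [hwsucc n]
        have houts := hmod (z (k0+1)) (S.phi (w n)) hin
        rw [← hw1] at houts
        have hmS : S.bracket (z (k0+1)) (w (n+1)) = w (n+1) := by
          rw [hw1]
          exact S.bracket_eq₁ _ _ _ (by simpa using S.eps_pos.le) (hin.trans hγbe)
            (hin.trans hγbe)
        have hmU : S.bracket (w (n+1)) (S.phi (w n)) = w (n+1) := by
          rw [hw1]
          exact S.bracket_eq₂ _ _ _ (hin.trans hγbe) (by simpa using S.eps_pos.le)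
            (hin.trans hγbe)
        have hdS : dist (z (k0+1)) (w (n+1)) ≤ S.eps := by
          rw [dist_comm]; exact houts.1.trans hbeps
        have hdU : dist (S.phi (w n)) (w (n+1)) ≤ S.eps := by
          rw [dist_comm]; exact houts.2.trans hbeps
        -- AUX for n+1
        have hAUX1 : ∀ j : ℕ, j ≤ (n+1) + N →
            dist ((⇑S.phi.symm)^[j] (w (n+1))) (z (k0 + 1 - j)) ≤ c j := by
          intro j hj
          cases j with
          | zero =>
            simpa using (houts.1.trans (by rw [hc0]; linarith))
          | succ j =>
            have hpull := (S.unstable_iter hdU hmU (j+1)).2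
            have hfirst : dist ((⇑S.phi.symm)^[j+1] (w (n+1)))
                ((⇑S.phi.symm)^[j+1] (S.phi (w n))) ≤ S.lam^(j+1) * b := by
              rw [dist_comm]
              refine hpull.trans ?_
              have h1 : dist (S.phi (w n)) (w (n+1)) ≤ b := by
                rw [dist_comm]; exact houts.2
              have h2 : (0:ℝ) ≤ S.lam^(j+1) := pow_nonneg hlam0 _
              nlinarith
            have heq : (⇑S.phi.symm)^[j+1] (S.phi (w n)) = (⇑S.phi.symm)^[j] (w n) := by
              rw [Function.iterate_succ_apply, S.phi.symm_apply_apply]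
            have hsecond := hAUX j (by omega)
            rw [show k0 - (j:ℤ) = k0 + 1 - ((j:ℕ)+1:ℕ) by push_cast; ring] at hsecond
            calc dist ((⇑S.phi.symm)^[j+1] (w (n+1))) (z (k0 + 1 - ((j:ℕ)+1:ℕ)))
                ≤ dist ((⇑S.phi.symm)^[j+1] (w (n+1))) ((⇑S.phi.symm)^[j+1] (S.phi (w n)))
                  + dist ((⇑S.phi.symm)^[j+1] (S.phi (w n))) (z (k0 + 1 - ((j:ℕ)+1:ℕ))) :=
                  dist_triangle _ _ _
              _ ≤ S.lam^(j+1) * b + c j := by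
                  apply add_le_add hfirst
                  rw [heq]; exact hsecond
              _ = c (j+1) := hcstep j
        -- upgrade
        have hup : dist (w (n+1)) (z (k0+1)) ≤ t := by
          apply hNwin
          intro j hjN
          constructor
          · have := (S.stable_iter hdS hmS j).2
            have h2 : (0:ℝ) ≤ S.lam ^ j := pow_nonneg hlam0 _
            have h3 := S.pow_lam_le_one j
            have h4 : dist (z (k0+1)) (w (n+1)) ≤ b := by rw [dist_comm]; exact houts.1
            rw [dist_comm ((⇑S.phi)^[j] (w (n+1)))]
            calc dist ((⇑S.phi)^[j] (z (k0+1))) ((⇑S.phi)^[j] (w (n+1)))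
                ≤ S.lam ^ j * dist (z (k0+1)) (w (n+1)) := this
              _ ≤ δ₀ := by nlinarith
          · have h1 := hAUX1 j (by omega)
            have h2 := hztrack j hjN (k0+1)
            calc dist ((⇑S.phi.symm)^[j] (w (n+1))) ((⇑S.phi.symm)^[j] (z (k0+1)))
                ≤ dist ((⇑S.phi.symm)^[j] (w (n+1))) (z (k0+1-j))
                  + dist (z (k0+1-j)) ((⇑S.phi.symm)^[j] (z (k0+1))) := dist_triangle _ _ _
              _ ≤ c j + η := by
                  apply add_le_add h1
                  rw [dist_comm]; exact h2
              _ ≤ (η + B) + η := by have := hcle j; linarith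
              _ ≤ δ₀ := by
                  have h3 : M ≤ δ₀ := min_le_right _ _
                  simp only [hηdef, hBdef]; linarith
        rw [hek]
        refine ⟨hup, ?_⟩
        intro j hj
        have := hAUX1 j hj
        rwa [show k0 + 1 - (j:ℤ) = k0 + 1 - (j:ℤ) from rfl]
    -- extract the shadow point on the window
    refine ⟨(⇑S.phi.symm)^[m] (w (2*m)), fun k hk1 hk2 => ?_⟩
    have hxm : (⇑S.phi.symm)^[m] (w (2*m)) = S.zit (-(m:ℤ)) (w (2*m)) :=
      (S.zit_neg_natCast m (w (2*m))).symm
    set j : ℕ := (m - k).toNat with hjdef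
    have hjz : (j:ℤ) = (m:ℤ) - k := by omega
    have hzit : S.zit k ((⇑S.phi.symm)^[m] (w (2*m))) = (⇑S.phi.symm)^[j] (w (2*m)) := by
      rw [hxm, ← S.zit_add, ← S.zit_neg_natCast j (w (2*m))]
      congr 1
      omega
    rw [hzit]
    have hIdx : -(m:ℤ) + ((2*m : ℕ):ℤ) - j = k := by omega
    have := (INV (2*m)).2 j (by omega)
    rw [hIdx] at this
    exact this.trans (hcle j)
  -- compactness limit
  choose xs hxs using main
  obtain ⟨x, -, ψ, hψ, hlim⟩ := IsCompact.tendsto_subseq (s := (univ : Set X))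
    isCompact_univ (fun n => mem_univ (xs n))
  refine ⟨x, fun k => ?_⟩
  have hcont : Continuous (fun y : X => dist (S.zit k y) (z k)) :=
    (S.continuous_zit k).dist continuous_const
  have hct : Tendsto (fun i => dist (S.zit k (xs (ψ i))) (z k)) atTop
      (𝓝 (dist (S.zit k x) (z k))) := (hcont.tendsto x).comp hlim
  have hbound : dist (S.zit k x) (z k) ≤ η + B := by
    refine le_of_tendsto hct ?_
    filter_upwards [eventually_ge_atTop k.natAbs] with i hi
    have h1 : k.natAbs ≤ ψ i := hi.trans hψ.le_apply
    exact hxs (ψ i) k (by omega) (by omega)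
  refine hbound.trans ?_
  have h1 : M ≤ β := min_le_left _ _
  simp only [hηdef, hBdef]; linarith


end SmaleSpace


lemma exists_partition {X : Type} [MetricSpace X] [CompactSpace X] [TotallyDisconnectedSpace X]
    (r : ℝ) (hr : 0 < r) :
    ∃ (n : ℕ) (Q : Fin n → Set X), (∀ i, IsClopen (Q i)) ∧
      (∀ i, ∀ p ∈ Q i, ∀ q ∈ Q i, dist p q ≤ r) ∧
      (∀ x : X, ∃ i, x ∈ Q i) ∧
      (∀ i j, i ≠ j → Disjoint (Q i) (Q j)) := by
  classical
  have hV : ∀ x : X, ∃ V : Set X, IsClopen V ∧ x ∈ V ∧ V ⊆ Metric.ball x (r/2) := fun x =>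
    compact_exists_isClopen_in_isOpen Metric.isOpen_ball (Metric.mem_ball_self (by linarith))
  choose V hVcl hVmem hVsub using hV
  obtain ⟨T, hT⟩ := isCompact_univ.elim_finite_subcover V (fun x => (hVcl x).2)
    (fun x _ => mem_iUnion.mpr ⟨x, hVmem x⟩)
  set n := T.card with hn
  set e : Fin n → T := fun i => T.equivFin.symm i with he
  set C : Fin n → Set X := fun i => V ((e i : X)) with hC
  have hCcl : ∀ i, IsClopen (C i) := fun i => hVcl _
  set Q : Fin n → Set X := fun i => C i \ ⋃ (j : Fin n) (_ : j < i), C j with hQ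
  refine ⟨n, Q, ?_, ?_, ?_, ?_⟩
  · intro i
    apply (hCcl i).diff
    constructor
    · apply isClosed_iUnion_of_finite
      intro j
      apply isClosed_iUnion_of_finite
      intro _
      exact (hCcl j).1
    · exact isOpen_iUnion fun j => isOpen_iUnion fun _ => (hCcl j).2
  · intro i p hp q hq
    have hp' : p ∈ Metric.ball ((e i : X)) (r/2) := hVsub _ hp.1
    have hq' : q ∈ Metric.ball ((e i : X)) (r/2) := hVsub _ hq.1
    rw [Metric.mem_ball] at hp' hq'
    calc dist p q ≤ dist p ((e i : X)) + dist ((e i : X)) q := dist_triangle _ _ _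
      _ ≤ r := by rw [dist_comm ((e i : X)) q] at *; linarith
  · intro x
    have hx : x ∈ ⋃ y ∈ T, V y := hT (mem_univ x)
    rw [mem_iUnion₂] at hx
    obtain ⟨y, hyT, hxy⟩ := hx
    have hne : (Finset.univ.filter (fun i => x ∈ C i)).Nonempty := by
      refine ⟨T.equivFin ⟨y, hyT⟩, ?_⟩
      rw [Finset.mem_filter]
      refine ⟨Finset.mem_univ _, ?_⟩
      show x ∈ V ((e (T.equivFin ⟨y, hyT⟩) : X))
      rw [he]
      simp only [Equiv.symm_apply_apply]
      exact hxy
    set i0 := (Finset.univ.filter (fun i => x ∈ C i)).min' hne with hi0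
    have hmem : x ∈ C i0 := by
      have := (Finset.univ.filter (fun i => x ∈ C i)).min'_mem hne
      rw [Finset.mem_filter] at this
      exact this.2
    refine ⟨i0, hmem, ?_⟩
    intro hbad
    rw [mem_iUnion₂] at hbad
    obtain ⟨j, hji, hxj⟩ := hbad
    have : i0 ≤ j := Finset.min'_le _ j (Finset.mem_filter.mpr ⟨Finset.mem_univ j, hxj⟩)
    omega
  · intro i j hij
    rcases lt_or_gt_of_ne hij with hlt | hlt
    · rw [Set.disjoint_left]
      intro x hxi hxj
      exact hxj.2 (mem_iUnion₂.mpr ⟨i, hlt, hxi.1⟩)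
    · rw [Set.disjoint_left]
      intro x hxi hxj
      exact hxi.2 (mem_iUnion₂.mpr ⟨j, hlt, hxj.1⟩)

lemma partition_gap {X : Type} [MetricSpace X] [CompactSpace X] {n : ℕ} {Q : Fin n → Set X}
    (hcl : ∀ i, IsClopen (Q i)) (hdisj : ∀ i j, i ≠ j → Disjoint (Q i) (Q j)) :
    ∃ g > (0:ℝ), ∀ i j, i ≠ j → ∀ p ∈ Q i, ∀ q ∈ Q j, g ≤ dist p q := by
  classical
  have hpair : ∀ ij : Fin n × Fin n, ∃ g > (0:ℝ),
      ij.1 ≠ ij.2 → ∀ p ∈ Q ij.1, ∀ q ∈ Q ij.2, g ≤ dist p q := by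
    intro ij
    by_cases hij : ij.1 = ij.2
    · exact ⟨1, one_pos, fun h => absurd hij h⟩
    · obtain ⟨δ, hδ, hth⟩ := (hdisj _ _ hij).exists_thickenings
        ((hcl ij.1).1.isCompact) (hcl ij.2).1
      refine ⟨δ, hδ, fun _ p hp q hq => ?_⟩
      by_contra hlt
      push_neg at hlt
      have h1 : q ∈ Metric.thickening δ (Q ij.1) :=
        Metric.mem_thickening_iff.mpr ⟨p, hp, by rwa [dist_comm]⟩
      have h2 : q ∈ Metric.thickening δ (Q ij.2) :=
        Metric.self_subset_thickening hδ _ hq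
      exact Set.disjoint_left.mp hth h1 h2
  choose d hd0 hdle using hpair
  rcases isEmpty_or_nonempty (Fin n × Fin n) with he | hne
  · exact ⟨1, one_pos, fun i j _ => (he.elim (i, j))⟩
  · refine ⟨Finset.univ.inf' Finset.univ_nonempty d, ?_, ?_⟩
    · show (0:ℝ) < _
      rw [Finset.lt_inf'_iff]
      intro ij _
      exact hd0 ij
    · intro i j hij p hp q hq
      exact (Finset.inf'_le d (Finset.mem_univ (i, j))).trans (hdle (i, j) hij p hp q hq)


/-- Stable equivalence: the forward orbits are asymptotic. -/
def StableEquiv {X : Type} [MetricSpace X] (φ : X → X) (x y : X) : Prop :=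
  Tendsto (fun n : ℕ => dist (φ^[n] x) (φ^[n] y)) atTop (𝓝 0)

/-- Unstable equivalence: the backward orbits are asymptotic. -/
def UnstableEquiv {X : Type} [MetricSpace X] (φ : X ≃ₜ X) (x y : X) : Prop :=
  Tendsto (fun n : ℕ => dist ((φ.symm : X → X)^[n] x) ((φ.symm : X → X)^[n] y)) atTop (𝓝 0)

/-- A point-free formulation of non-wandering: every point is non-wandering. -/
def NonWandering {X : Type} [TopologicalSpace X] (φ : X → X) : Prop :=
  ∀ x : X, ∀ U ∈ 𝓝 x, ∃ n : ℕ, 1 ≤ n ∧ (φ^[n] '' U ∩ U).Nonempty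

/-- A factor map between topological dynamical systems. -/
structure IsFactorMap {Y X : Type} [TopologicalSpace Y] [TopologicalSpace X]
    (ψ : Y ≃ₜ Y) (φ : X ≃ₜ X) (π : Y → X) : Prop where
  continuous : Continuous π
  surjective : Function.Surjective π
  semiconj : ∀ y, π (ψ y) = φ (π y)

/-- An `s`-resolving factor map: injective on stable equivalence classes. -/
structure IsSResolving {Y X : Type} [MetricSpace Y] [MetricSpace X]
    (ψ : Y ≃ₜ Y) (φ : X ≃ₜ X) (π : Y → X) extends IsFactorMap ψ φ π : Prop where
  inj : ∀ y : Y, Set.InjOn π {y' | StableEquiv (⇑ψ) y y'}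

/-- A `u`-resolving factor map: injective on unstable equivalence classes. -/
structure IsUResolving {Y X : Type} [MetricSpace Y] [MetricSpace X]
    (ψ : Y ≃ₜ Y) (φ : X ≃ₜ X) (π : Y → X) extends IsFactorMap ψ φ π : Prop where
  inj : ∀ y : Y, Set.InjOn π {y' | UnstableEquiv ψ y y'}

/-- An `s`-bijective factor map: bijective from each stable class onto that of the image. -/
structure IsSBij {Y X : Type} [MetricSpace Y] [MetricSpace X]
    (ψ : Y ≃ₜ Y) (φ : X ≃ₜ X) (π : Y → X) extends IsFactorMap ψ φ π : Prop where
  bij : ∀ y : Y, Set.BijOn π {y' | StableEquiv (⇑ψ) y y'} {x | StableEquiv (⇑φ) (π y) x}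

/-- A `u`-bijective factor map: bijective from each unstable class onto that of the image. -/
structure IsUBij {Y X : Type} [MetricSpace Y] [MetricSpace X]
    (ψ : Y ≃ₜ Y) (φ : X ≃ₜ X) (π : Y → X) extends IsFactorMap ψ φ π : Prop where
  bij : ∀ y : Y, Set.BijOn π {y' | UnstableEquiv ψ y y'} {x | UnstableEquiv φ (π y) x}

/-- A finite directed graph. -/
structure FinGraph : Type 1 where
  V : Type
  E : Type
  [fV : Fintype V]
  [fE : Fintype E]
  [dV : DecidableEq V]
  [dE : DecidableEq E]
  src : E → V
  tgt : E → V

attribute [instance] FinGraph.fV FinGraph.fE FinGraph.dV FinGraph.dE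

namespace FinGraph

/-- The space of bi-infinite edge paths of `G`. -/
abbrev PathSp (G : FinGraph) : Type := {e : ℤ → G.E // ∀ k, G.tgt (e k) = G.src (e (k + 1))}

/-- The left shift on the path space. -/
def shift (G : FinGraph) : G.PathSp ≃ G.PathSp where
  toFun e := ⟨fun k => e.1 (k + 1), fun k => e.2 (k + 1)⟩
  invFun e := ⟨fun k => e.1 (k - 1), fun k => by
    dsimp only
    have h := e.2 (k - 1)
    rw [show k - 1 + 1 = k by ring] at h
    rw [show k + 1 - 1 = k by ring]
    exact h⟩
  left_inv e := Subtype.ext (funext fun k => congrArg e.1 (by ring))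
  right_inv e := Subtype.ext (funext fun k => congrArg e.1 (by ring))

/-- The metric on the path space. -/
noncomputable def pathDist (G : FinGraph) (e f : G.PathSp) : ℝ :=
  sInf ({1} ∪ {r | ∃ l : ℕ, r = (2 : ℝ) ^ (-(l : ℤ) - 1) ∧ ∀ k : ℤ, |k| ≤ (l : ℤ) → e.1 k = f.1 k})

/-- Splicing of two paths whose 0th edges terminate at the same vertex:
the past of `f` followed by the future of `e`. -/
def splice (G : FinGraph) (e f : G.PathSp) (h : G.tgt (e.1 0) = G.tgt (f.1 0)) : G.PathSp :=
  ⟨fun k => if k ≤ 0 then f.1 k else e.1 k, by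
    intro k
    dsimp only
    rcases lt_trichotomy k 0 with hk | hk | hk
    · rw [if_pos hk.le, if_pos (by omega : k + 1 ≤ 0)]
      exact f.2 k
    · subst hk
      rw [if_pos le_rfl, if_neg (by omega)]
      rw [← h]
      exact e.2 0
    · rw [if_neg (by omega), if_neg (by omega)]
      exact e.2 k⟩

end FinGraph

/-- Edge sets carry the discrete topology. -/
instance (G : FinGraph) : TopologicalSpace G.E := ⊥

instance (G : FinGraph) : DiscreteTopology G.E := ⟨rfl⟩

/-- The shift as a homeomorphism of the path space with its (product) topology. -/
def FinGraph.shiftH (G : FinGraph) : G.PathSp ≃ₜ G.PathSp where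
  toEquiv := G.shift
  continuous_toFun := by
    apply Continuous.subtype_mk
    exact continuous_pi fun k => (continuous_apply (k + 1)).comp continuous_subtype_val
  continuous_invFun := by
    apply Continuous.subtype_mk
    exact continuous_pi fun k => (continuous_apply (k - 1)).comp continuous_subtype_val

/-- A topological dynamical system is a shift of finite type if it is topologically
conjugate to the edge shift of some finite directed graph. -/
def IsSFT (A : Type) [TopologicalSpace A] (f : A → A) : Prop :=
  ∃ (G : FinGraph) (h : A ≃ₜ G.PathSp), ∀ a, h (f a) = G.shift (h a)

section GraphConstr
variable {X : Type} [MetricSpace X]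

/-- realizable words -/
def wordOK (S : SmaleSpace X) {n : ℕ} (Q : Fin n → Set X) (N : ℕ) {L : ℕ}
    (u : Fin L → Fin n) : Prop :=
  ∃ x : X, ∀ j : Fin L, S.zit (((j:ℕ):ℤ) - N) x ∈ Q (u j)

/-- the graph of realizable words -/
noncomputable def graphOf (S : SmaleSpace X) {n : ℕ} (Q : Fin n → Set X) (N m : ℕ) :
    FinGraph where
  V := {v : Fin m → Fin n // wordOK S Q N v}
  E := {u : Fin (m+1) → Fin n // wordOK S Q N u}
  fV := Fintype.ofFinite _
  fE := Fintype.ofFinite _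
  dV := Classical.decEq _
  dE := Classical.decEq _
  src := fun u => ⟨fun j => u.1 (Fin.castSucc j), by
    obtain ⟨x, hx⟩ := u.2
    refine ⟨x, fun j => ?_⟩
    have h1 := hx (Fin.castSucc j)
    rwa [Fin.coe_castSucc] at h1⟩
  tgt := fun u => ⟨fun j => u.1 (Fin.succ j), by
    obtain ⟨x, hx⟩ := u.2
    refine ⟨S.phi x, fun j => ?_⟩
    have h1 := hx (Fin.succ j)
    rw [Fin.val_succ] at h1
    rw [S.zit_phi]
    convert h1 using 2
    push_cast; ring⟩

lemma graphOf_tgt (S : SmaleSpace X) {n : ℕ} (Q : Fin n → Set X) (N m : ℕ)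
    (u : (graphOf S Q N m).E) (j : Fin m) :
    ((graphOf S Q N m).tgt u).1 j = u.1 (Fin.succ j) := rfl

lemma graphOf_src (S : SmaleSpace X) {n : ℕ} (Q : Fin n → Set X) (N m : ℕ)
    (u : (graphOf S Q N m).E) (j : Fin m) :
    ((graphOf S Q N m).src u).1 j = u.1 (Fin.castSucc j) := rfl

/-- the itinerary coding map -/
noncomputable def code (S : SmaleSpace X) {n : ℕ} (Q : Fin n → Set X) (idx : X → Fin n)
    (hidx : ∀ x : X, x ∈ Q (idx x)) (N m : ℕ) (x : X) : (graphOf S Q N m).PathSp :=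
  ⟨fun k => ⟨fun j => idx (S.zit (k + (j:ℕ) - N) x), by
      refine ⟨S.zit k x, fun j => ?_⟩
      rw [← S.zit_add]
      rw [show ((j:ℕ):ℤ) - N + k = k + (j:ℕ) - N by ring]
      exact hidx _⟩, by
    intro k
    apply Subtype.ext
    funext j
    show idx (S.zit (k + ((Fin.succ j : Fin (m+1)) :ℕ) - N) x)
        = idx (S.zit ((k+1) + ((Fin.castSucc j : Fin (m+1)) :ℕ) - N) x)
    rw [Fin.val_succ, Fin.coe_castSucc]
    rw [show (k + ((((j:ℕ)+1):ℕ):ℤ) - N) = ((k+1) + ((j:ℕ):ℤ) - N) by push_cast; ring]⟩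

lemma code_apply (S : SmaleSpace X) {n : ℕ} (Q : Fin n → Set X) (idx : X → Fin n)
    (hidx : ∀ x : X, x ∈ Q (idx x)) (N m : ℕ) (x : X) (k : ℤ) (j : Fin (m+1)) :
    ((code S Q idx hidx N m x).1 k).1 j = idx (S.zit (k + (j:ℕ) - N) x) := rfl

end GraphConstr

/-- Every Smale space whose underlying space is totally disconnected is
topologically conjugate to the shift of finite type `(Σ_G, σ)` of some finite directed graph:
there is a homeomorphism `h : X → Σ_G` with `h ∘ φ = σ ∘ h`. -/
theorem totally_disconnected_smale_space_is_SFT {X : Type} [MetricSpace X]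
    (S : SmaleSpace X) (htd : TotallyDisconnectedSpace X) :
    ∃ (G : FinGraph) (h : X ≃ₜ G.PathSp), ∀ x : X, h (S.phi x) = G.shift (h x) := by
  classical
  haveI := S.compact
  haveI := htd
  obtain ⟨δ₀, hδ₀, hδ₀e, hexp⟩ := S.expansive
  obtain ⟨n, Q, hQcl, hQdiam, hQcover, hQdisj⟩ := exists_partition (X := X) δ₀ hδ₀
  obtain ⟨g, hg, hgap⟩ := partition_gap hQcl hQdisj
  have hβpos : (0:ℝ) < min g δ₀ / 2 := by positivity
  obtain ⟨δsh, hδsh, hshadow⟩ := S.shadowing hδ₀ hδ₀e hexp (min g δ₀ / 2) hβpos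
  obtain ⟨N, hNwin⟩ := S.unif_expansive hexp δsh hδsh
  choose idx hidxmem using hQcover
  have hidx_eq : ∀ (x : X) i, x ∈ Q i → idx x = i := by
    intro x i hxi
    by_contra hne
    exact Set.disjoint_left.mp (hQdisj _ _ hne) (hidxmem x) hxi
  set m := 2*N+1 with hm
  have h0lt : (0:ℕ) < m+1 := by omega
  set G : FinGraph := graphOf S Q N m with hG
  set h0 : X → G.PathSp := code S Q idx hidxmem N m with hh0
  have hcode : ∀ (x : X) (k : ℤ) (j : Fin (m+1)),
      ((h0 x).1 k).1 j = idx (S.zit (k + (j:ℕ) - N) x) := fun x k j => rfl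
  -- injectivity
  have hinj : Function.Injective h0 := by
    intro x y hxy
    have hletters : ∀ t : ℤ, idx (S.zit t x) = idx (S.zit t y) := by
      intro t
      have h1 := congrArg (fun p : G.PathSp => ((p.1 (t + N)).1 ⟨0, h0lt⟩ : Fin n)) hxy
      have h2 : idx (S.zit ((t + (N:ℤ)) + (((⟨0, h0lt⟩ : Fin (m+1)) : ℕ):ℤ) - N) x)
          = idx (S.zit ((t + (N:ℤ)) + (((⟨0, h0lt⟩ : Fin (m+1)) : ℕ):ℤ) - N) y) := h1
      have e0 : (t + (N:ℤ)) + (((⟨0, h0lt⟩ : Fin (m+1)) : ℕ):ℤ) - N = t := by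
        show (t + (N:ℤ)) + ((0:ℕ):ℤ) - N = t
        push_cast; ring
      rwa [e0] at h2
    apply hexp
    intro nn
    have hdall : ∀ t : ℤ, dist (S.zit t x) (S.zit t y) ≤ δ₀ := by
      intro t
      apply hQdiam (idx (S.zit t x)) _ (hidxmem _)
      rw [hletters t]; exact hidxmem _
    constructor
    · have h3 := hdall nn
      rwa [S.zit_natCast, S.zit_natCast] at h3
    · have h3 := hdall (-(nn:ℤ))
      rwa [S.zit_neg_natCast, S.zit_neg_natCast] at h3
  -- surjectivity
  have hsurj : Function.Surjective h0 := by
    intro p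
    set a : ℤ → Fin n := fun s => (p.1 s).1 ⟨0, h0lt⟩ with ha
    have hletter : ∀ (jv : ℕ) (hjv : jv < m+1) (k : ℤ), (p.1 k).1 ⟨jv, hjv⟩ = a (k + (jv:ℤ)) := by
      intro jv
      induction jv with
      | zero =>
        intro hjv k
        rw [show k + ((0:ℕ):ℤ) = k by push_cast; ring]
      | succ jv ih =>
        intro hjv k
        have hov := p.2 k
        have h2 := congrArg (fun v : G.V => v.1 ⟨jv, by omega⟩) hov
        have h3 : (p.1 k).1 (Fin.succ ⟨jv, by omega⟩)
            = (p.1 (k+1)).1 (Fin.castSucc ⟨jv, by omega⟩) := by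
          rw [← graphOf_tgt S Q N m (p.1 k) ⟨jv, by omega⟩,
            ← graphOf_src S Q N m (p.1 (k+1)) ⟨jv, by omega⟩]
          exact h2
        have e1 : (Fin.succ (⟨jv, by omega⟩ : Fin m)) = (⟨jv+1, hjv⟩ : Fin (m+1)) := rfl
        have e2 : (Fin.castSucc (⟨jv, by omega⟩ : Fin m)) = (⟨jv, by omega⟩ : Fin (m+1)) := rfl
        rw [e1, e2] at h3
        rw [h3, ih (by omega) (k+1)]
        congr 1
        push_cast; ring
    choose xr hxr using fun k : ℤ => (p.1 k).2
    have hreal : ∀ (k T : ℤ), -(N:ℤ) ≤ T → T ≤ (N:ℤ)+1 →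
        S.zit T (xr k) ∈ Q (a (k + T + N)) := by
      intro k T hT1 hT2
      have hj : (T + N).toNat < m+1 := by omega
      have h3 := hxr k ⟨(T+(N:ℤ)).toNat, hj⟩
      rw [hletter _ hj k] at h3
      have h4 : S.zit ((((T+(N:ℤ)).toNat :ℕ):ℤ) - N) (xr k)
          ∈ Q (a (k + (((T+(N:ℤ)).toNat :ℕ):ℤ))) := h3
      rw [show ((((T+(N:ℤ)).toNat :ℕ):ℤ) - (N:ℤ)) = T by omega] at h4
      rwa [show k + (((T+(N:ℤ)).toNat :ℕ):ℤ) = k + T + N by omega] at h4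
    have hjump : ∀ k : ℤ, dist (S.phi (xr k)) (xr (k+1)) ≤ δsh := by
      intro k
      apply hNwin
      intro i hiN
      constructor
      · have e1 : (⇑S.phi)^[i] (S.phi (xr k)) = S.zit ((i:ℤ)+1) (xr k) := by
          rw [← S.zit_natCast, S.zit_phi]
        have e2 : (⇑S.phi)^[i] (xr (k+1)) = S.zit (i:ℤ) (xr (k+1)) := (S.zit_natCast i _).symm
        rw [e1, e2]
        have h1 := hreal k ((i:ℤ)+1) (by omega) (by omega)
        have h2 := hreal (k+1) (i:ℤ) (by omega) (by omega)
        rw [show (k+1) + (i:ℤ) + N = k + ((i:ℤ)+1) + N by ring] at h2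
        exact hQdiam _ _ h1 _ h2
      · have e1 : (⇑S.phi.symm)^[i] (S.phi (xr k)) = S.zit (-(i:ℤ)+1) (xr k) := by
          rw [← S.zit_neg_natCast, S.zit_phi]
        have e2 : (⇑S.phi.symm)^[i] (xr (k+1)) = S.zit (-(i:ℤ)) (xr (k+1)) :=
          (S.zit_neg_natCast i _).symm
        rw [e1, e2]
        have h1 := hreal k (-(i:ℤ)+1) (by omega) (by omega)
        have h2 := hreal (k+1) (-(i:ℤ)) (by omega) (by omega)
        rw [show (k+1) + (-(i:ℤ)) + N = k + (-(i:ℤ)+1) + N by ring] at h2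
        exact hQdiam _ _ h1 _ h2
    obtain ⟨x, hx⟩ := hshadow xr hjump
    have hmemb : ∀ k : ℤ, idx (S.zit k x) = a (k + N) := by
      intro k
      by_contra hne
      have hm0 : xr k ∈ Q (a (k + N)) := by
        have h1 := hreal k 0 (by omega) (by omega)
        rw [show k + (0:ℤ) + N = k + N by ring] at h1
        rwa [S.zit_zero] at h1
      have h1 := hgap _ _ hne (S.zit k x) (hidxmem _) (xr k) hm0
      have h2 := hx k
      have h3 : min g δ₀ / 2 < g := by
        have h4 := min_le_left g δ₀
        linarith
      linarith
    refine ⟨x, ?_⟩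
    apply Subtype.ext
    funext k
    apply Subtype.ext
    funext j
    obtain ⟨jv, hjv⟩ := j
    show idx (S.zit (k + (jv:ℤ) - N) x) = (p.1 k).1 ⟨jv, hjv⟩
    rw [hletter jv hjv k]
    have h1 := hmemb (k + (jv:ℤ) - N)
    rwa [show (k + (jv:ℤ) - N) + N = k + (jv:ℤ) by ring] at h1
  -- continuity
  have hcont : Continuous h0 := by
    have hval : Continuous (fun x : X => ((h0 x).1 : ℤ → G.E)) := by
      apply continuous_pi
      intro k
      have hfib : ∀ e : G.E, IsOpen {x : X | ∀ j : Fin (m+1),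
          idx (S.zit (k + (j:ℕ) - N) x) = e.1 j} := by
        intro e
        have heq : {x : X | ∀ j : Fin (m+1), idx (S.zit (k + (j:ℕ) - N) x) = e.1 j}
            = ⋂ j : Fin (m+1), (S.zit (k + (j:ℕ) - N)) ⁻¹' Q (e.1 j) := by
          ext x
          simp only [mem_setOf_eq, mem_iInter, mem_preimage]
          constructor
          · intro h j; rw [← h j]; exact hidxmem _
          · intro h j; exact hidx_eq _ _ (h j)
        rw [heq]
        exact isOpen_iInter_of_finite fun j => (hQcl _).2.preimage (S.continuous_zit _)
      have hlc : IsLocallyConstant (fun x : X => ((h0 x).1 k : G.E)) := by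
        intro s
        have heq : (fun x : X => ((h0 x).1 k)) ⁻¹' s
            = ⋃ e ∈ s, {x : X | ∀ j : Fin (m+1), idx (S.zit (k + (j:ℕ) - N) x) = e.1 j} := by
          ext x
          simp only [mem_preimage, mem_iUnion, mem_setOf_eq]
          constructor
          · intro hxs
            exact ⟨(h0 x).1 k, hxs, fun j => rfl⟩
          · rintro ⟨e, hes, hej⟩
            have he' : (h0 x).1 k = e := Subtype.ext (funext fun j => hej j)
            rwa [he']
        rw [heq]
        exact isOpen_biUnion fun e _ => hfib e
      exact hlc.continuous
    exact hval.subtype_mk _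
  refine ⟨G, Continuous.homeoOfEquivCompactToT2 (f := Equiv.ofBijective h0 ⟨hinj, hsurj⟩) hcont, ?_⟩
  intro x
  show h0 (S.phi x) = G.shift (h0 x)
  apply Subtype.ext
  funext k
  apply Subtype.ext
  funext j
  show idx (S.zit (k + (j:ℕ) - N) (S.phi x)) = idx (S.zit ((k+1) + (j:ℕ) - N) x)
  rw [S.zit_phi, show (k + ((j:ℕ):ℤ) - N + 1) = ((k+1) + ((j:ℕ):ℤ) - N) by ring]
end

section
/- Every s-bijective or u-bijective factor map π : (Y, ψ) → (X, φ) between Smale spaces is finite-to-one with a uniform bound: there exists a positive integer N such that #π^{-1}(x) ≤ N for every x ∈ X. -/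
open Filter Topology Set

section FiniteToOneHelpers

variable {Z : Type} [MetricSpace Z]

lemma SmaleSpace.lam_nonneg_s13 (S : SmaleSpace Z) : 0 ≤ S.lam := S.lam_pos.le

lemma SmaleSpace.pow_lam_le_one_s13 (S : SmaleSpace Z) (n : ℕ) : S.lam ^ n ≤ 1 :=
  pow_le_one₀ S.lam_pos.le S.lam_lt_one.le

/-- Forward contraction on local stable sets, with persistence of the bracket relation. -/
lemma SmaleSpace.iter_s (S : SmaleSpace Z) {a b : Z} (hd : dist a b ≤ S.eps)
    (hb : S.bracket a b = b) (n : ℕ) :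
    dist ((⇑S.phi)^[n] a) ((⇑S.phi)^[n] b) ≤ S.lam ^ n * dist a b ∧
      S.bracket ((⇑S.phi)^[n] a) ((⇑S.phi)^[n] b) = (⇑S.phi)^[n] b := by
  induction n with
  | zero => simpa using hb
  | succ n ih =>
    set an := (⇑S.phi)^[n] a with han
    set bn := (⇑S.phi)^[n] b with hbn
    have hdn : dist an bn ≤ S.eps := by
      refine ih.1.trans (le_trans ?_ hd)
      calc S.lam ^ n * dist a b ≤ 1 * dist a b :=
        mul_le_mul_of_nonneg_right (S.pow_lam_le_one_s13 n) dist_nonneg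
      _ = dist a b := one_mul _
    have hc := S.contract_s an bn an hdn ih.2 (by simpa using S.eps_pos.le) (S.bracket_self an)
    have hstep : dist (S.phi an) (S.phi bn) ≤ S.lam * (S.lam ^ n * dist a b) := by
      rw [dist_comm]
      exact hc.trans (by rw [dist_comm]; exact mul_le_mul_of_nonneg_left ih.1 S.lam_pos.le)
    have hd1 : dist ((⇑S.phi)^[n+1] a) ((⇑S.phi)^[n+1] b) ≤ S.lam ^ (n+1) * dist a b := by
      rw [Function.iterate_succ_apply', Function.iterate_succ_apply', ← han, ← hbn]
      calc dist (S.phi an) (S.phi bn) ≤ S.lam * (S.lam ^ n * dist a b) := hstep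
      _ = S.lam ^ (n+1) * dist a b := by ring
    refine ⟨hd1, ?_⟩
    have hdnext : dist (S.phi an) (S.phi bn) ≤ S.eps := by
      refine hstep.trans (le_trans ?_ hd)
      calc S.lam * (S.lam ^ n * dist a b) = S.lam ^ (n+1) * dist a b := by ring
      _ ≤ 1 * dist a b := mul_le_mul_of_nonneg_right (S.pow_lam_le_one_s13 _) dist_nonneg
      _ = dist a b := one_mul _
    have := S.bracket_phi an bn hdn hdnext
    rw [Function.iterate_succ_apply', Function.iterate_succ_apply', ← han, ← hbn, ← this, ih.2]

/-- Backward contraction on local unstable sets, with persistence of the bracket relation. -/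
lemma SmaleSpace.iter_u (S : SmaleSpace Z) {a b : Z} (hd : dist a b ≤ S.eps)
    (hb : S.bracket a b = a) (n : ℕ) :
    dist ((⇑S.phi.symm)^[n] a) ((⇑S.phi.symm)^[n] b) ≤ S.lam ^ n * dist a b ∧
      S.bracket ((⇑S.phi.symm)^[n] a) ((⇑S.phi.symm)^[n] b) = (⇑S.phi.symm)^[n] a := by
  induction n with
  | zero => simpa using hb
  | succ n ih =>
    set an := (⇑S.phi.symm)^[n] a with han
    set bn := (⇑S.phi.symm)^[n] b with hbn
    have hdn : dist an bn ≤ S.eps := by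
      refine ih.1.trans (le_trans ?_ hd)
      calc S.lam ^ n * dist a b ≤ 1 * dist a b :=
        mul_le_mul_of_nonneg_right (S.pow_lam_le_one_s13 n) dist_nonneg
      _ = dist a b := one_mul _
    have hc := S.contract_u bn an bn (by rwa [dist_comm]) ih.2
      (by simpa using S.eps_pos.le) (S.bracket_self bn)
    have hstep : dist (S.phi.symm an) (S.phi.symm bn) ≤ S.lam * (S.lam ^ n * dist a b) :=
      hc.trans (mul_le_mul_of_nonneg_left ih.1 S.lam_pos.le)
    have hd1 : dist ((⇑S.phi.symm)^[n+1] a) ((⇑S.phi.symm)^[n+1] b) ≤ S.lam ^ (n+1) * dist a b := by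
      rw [Function.iterate_succ_apply', Function.iterate_succ_apply', ← han, ← hbn]
      calc dist (S.phi.symm an) (S.phi.symm bn) ≤ S.lam * (S.lam ^ n * dist a b) := hstep
      _ = S.lam ^ (n+1) * dist a b := by ring
    refine ⟨hd1, ?_⟩
    have hdnext : dist (S.phi.symm an) (S.phi.symm bn) ≤ S.eps := by
      refine hstep.trans (le_trans ?_ hd)
      calc S.lam * (S.lam ^ n * dist a b) = S.lam ^ (n+1) * dist a b := by ring
      _ ≤ 1 * dist a b := mul_le_mul_of_nonneg_right (S.pow_lam_le_one_s13 _) dist_nonneg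
      _ = dist a b := one_mul _
    have hphi := S.bracket_phi (S.phi.symm an) (S.phi.symm bn) hdnext (by
      simpa [Homeomorph.apply_symm_apply] using hdn)
    rw [Homeomorph.apply_symm_apply, Homeomorph.apply_symm_apply, ih.2] at hphi
    have : S.bracket (S.phi.symm an) (S.phi.symm bn) = S.phi.symm an :=
      S.phi.injective (by rw [hphi, Homeomorph.apply_symm_apply])
    rw [Function.iterate_succ_apply', Function.iterate_succ_apply', ← han, ← hbn, this]


/-- Smale spaces are expansive. -/
lemma SmaleSpace.expansive_s13 (T : SmaleSpace Z) :
    ∃ ε₀ > 0, ∀ a b : Z,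
      (∀ n : ℕ, dist ((⇑T.phi)^[n] a) ((⇑T.phi)^[n] b) ≤ ε₀) →
      (∀ n : ℕ, dist ((⇑T.phi.symm)^[n] a) ((⇑T.phi.symm)^[n] b) ≤ ε₀) → a = b := by
  haveI := T.compact
  have hK : IsCompact {p : Z × Z | dist p.1 p.2 ≤ T.eps} :=
    (isClosed_le (by fun_prop) continuous_const).isCompact
  have hUC := Metric.uniformContinuousOn_iff.mp
    (hK.uniformContinuousOn_of_continuous T.bracket_cont) T.eps T.eps_pos
  obtain ⟨δ', hδ'pos, hδ'⟩ := hUC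
  refine ⟨min (δ'/2) T.eps, lt_min (by linarith) T.eps_pos, fun a b hf hbwd => ?_⟩
  set ε₀ := min (δ'/2) T.eps with hε₀
  have hε₀eps : ε₀ ≤ T.eps := min_le_right _ _
  have hε₀δ' : ε₀ < δ' := lt_of_le_of_lt (min_le_left _ _) (by linarith)
  have hlamten : Tendsto (fun n : ℕ => T.lam ^ n * T.eps) atTop (𝓝 0) := by
    simpa using (tendsto_pow_atTop_nhds_zero_of_lt_one T.lam_pos.le T.lam_lt_one).mul_const T.eps
  -- the bracket point
  set c := T.bracket a b with hc
  -- Part 1 : c = b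
  have hforward : ∀ n : ℕ,
      (⇑T.phi)^[n] c = T.bracket ((⇑T.phi)^[n] a) ((⇑T.phi)^[n] b) := by
    intro n
    induction n with
    | zero => simp [hc]
    | succ n ih =>
      rw [Function.iterate_succ_apply', Function.iterate_succ_apply',
        Function.iterate_succ_apply', ih]
      refine T.bracket_phi _ _ ((hf n).trans hε₀eps) ?_
      have h1 := (hf (n+1)).trans hε₀eps
      rwa [Function.iterate_succ_apply', Function.iterate_succ_apply'] at h1
  have hmemK : ∀ n : ℕ, ((⇑T.phi)^[n] a, (⇑T.phi)^[n] b) ∈ {p : Z × Z | dist p.1 p.2 ≤ T.eps} :=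
    fun n => (hf n).trans hε₀eps
  have hmemK2 : ∀ n : ℕ, ((⇑T.phi)^[n] b, (⇑T.phi)^[n] b) ∈ {p : Z × Z | dist p.1 p.2 ≤ T.eps} := by
    intro n; simp [T.eps_pos.le]
  have hdistcb : ∀ n : ℕ, dist ((⇑T.phi)^[n] c) ((⇑T.phi)^[n] b) ≤ T.eps := by
    intro n
    have := hδ' _ (hmemK n) _ (hmemK2 n) (by
      rw [Prod.dist_eq]
      simp only [dist_self]
      rw [sup_eq_left.mpr dist_nonneg]
      exact lt_of_le_of_lt (hf n) hε₀δ')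
    rw [T.bracket_self] at this
    rw [hforward n]
    exact this.le
  have hrelcb : ∀ n : ℕ, T.bracket ((⇑T.phi)^[n] c) ((⇑T.phi)^[n] b) = (⇑T.phi)^[n] c := by
    intro n
    rw [hforward n]
    exact T.bracket_eq₂ _ _ _ ((hf n).trans hε₀eps) (by simp [T.eps_pos.le]) ((hf n).trans hε₀eps)
  have hLI : ∀ (x : Z) (n : ℕ), (⇑T.phi.symm)^[n] ((⇑T.phi)^[n] x) = x :=
    fun x n => Function.LeftInverse.iterate T.phi.symm_apply_apply n x
  have hcb : c = b := by
    have hle : ∀ n : ℕ, dist c b ≤ T.lam ^ n * T.eps := by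
      intro n
      have := (T.iter_u (hdistcb n) (hrelcb n) n).1
      rw [hLI c n, hLI b n] at this
      exact this.trans (mul_le_mul_of_nonneg_left (hdistcb n) (pow_nonneg T.lam_pos.le n))
    have : dist c b ≤ 0 := ge_of_tendsto hlamten (Eventually.of_forall hle)
    exact dist_le_zero.mp this
  -- Part 2 : c = a
  have hbackward : ∀ n : ℕ,
      (⇑T.phi.symm)^[n] c = T.bracket ((⇑T.phi.symm)^[n] a) ((⇑T.phi.symm)^[n] b) := by
    intro n
    induction n with
    | zero => simp [hc]
    | succ n ih =>
      rw [Function.iterate_succ_apply', Function.iterate_succ_apply',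
        Function.iterate_succ_apply', ih]
      have hphi := T.bracket_phi ((⇑T.phi.symm)^[n+1] a) ((⇑T.phi.symm)^[n+1] b)
        ((hbwd (n+1)).trans hε₀eps)
        (by rw [Function.iterate_succ_apply', Function.iterate_succ_apply',
              Homeomorph.apply_symm_apply, Homeomorph.apply_symm_apply]
            exact (hbwd n).trans hε₀eps)
      rw [Function.iterate_succ_apply', Function.iterate_succ_apply',
        Homeomorph.apply_symm_apply, Homeomorph.apply_symm_apply] at hphi
      exact T.phi.injective (by rw [Homeomorph.apply_symm_apply, hphi])
  have hdistac : ∀ n : ℕ, dist ((⇑T.phi.symm)^[n] a) ((⇑T.phi.symm)^[n] c) ≤ T.eps := by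
    intro n
    have hm1 : ((⇑T.phi.symm)^[n] a, (⇑T.phi.symm)^[n] b) ∈
        {p : Z × Z | dist p.1 p.2 ≤ T.eps} := (hbwd n).trans hε₀eps
    have hm2 : ((⇑T.phi.symm)^[n] a, (⇑T.phi.symm)^[n] a) ∈
        {p : Z × Z | dist p.1 p.2 ≤ T.eps} := by simp [T.eps_pos.le]
    have := hδ' _ hm1 _ hm2 (by
      rw [Prod.dist_eq]
      simp only [dist_self]
      rw [sup_eq_right.mpr dist_nonneg, dist_comm]
      exact lt_of_le_of_lt (hbwd n) hε₀δ')
    rw [T.bracket_self] at this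
    rw [hbackward n, dist_comm]
    exact this.le
  have hrelac : ∀ n : ℕ,
      T.bracket ((⇑T.phi.symm)^[n] a) ((⇑T.phi.symm)^[n] c) = (⇑T.phi.symm)^[n] c := by
    intro n
    rw [hbackward n]
    exact T.bracket_eq₁ _ _ _ (by simp [T.eps_pos.le]) ((hbwd n).trans hε₀eps)
      ((hbwd n).trans hε₀eps)
  have hLI2 : ∀ (x : Z) (n : ℕ), (⇑T.phi)^[n] ((⇑T.phi.symm)^[n] x) = x :=
    fun x n => Function.LeftInverse.iterate T.phi.apply_symm_apply n x
  have hca : a = c := by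
    have hle : ∀ n : ℕ, dist a c ≤ T.lam ^ n * T.eps := by
      intro n
      have := (T.iter_s (hdistac n) (hrelac n) n).1
      rw [hLI2 a n, hLI2 c n] at this
      exact this.trans (mul_le_mul_of_nonneg_left (hdistac n) (pow_nonneg T.lam_pos.le n))
    exact dist_le_zero.mp (ge_of_tendsto hlamten (Eventually.of_forall hle))
  rw [hca, hcb]

/-- Reflexivity of `StableEquiv`. -/
lemma stableEquiv_refl' (φ : Z → Z) (y : Z) : StableEquiv φ y y := by
  unfold StableEquiv
  simp only [dist_self]
  exact tendsto_const_nhds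

/-- The main lemma: a factor map between Smale spaces which is injective on stable
equivalence classes is uniformly finite-to-one. -/
lemma main_resolving {Y X : Type} [MetricSpace Y] [MetricSpace X]
    (S : SmaleSpace Y) (T : SmaleSpace X) (π : Y → X)
    (hcont : Continuous π) (hsemi : ∀ y, π (S.phi y) = T.phi (π y))
    (hinj : ∀ y : Y, Set.InjOn π {y' | StableEquiv (⇑S.phi) y y'}) :
    ∃ N : ℕ, 1 ≤ N ∧ ∀ x : X, (π ⁻¹' {x}).Finite ∧ Nat.card (π ⁻¹' {x}) ≤ N := by
  classical
  haveI := S.compact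
  -- semiconjugacy, iterated and inverted
  have hsemiN : ∀ (n : ℕ) (y : Y), π ((⇑S.phi)^[n] y) = (⇑T.phi)^[n] (π y) :=
    fun n y => (Function.Semiconj.iterate_right hsemi n) y
  have hsemi' : ∀ y, π (S.phi.symm y) = T.phi.symm (π y) := by
    intro y
    have h := hsemi (S.phi.symm y)
    rw [Homeomorph.apply_symm_apply] at h
    rw [h, Homeomorph.symm_apply_apply]
  have hsemiN' : ∀ (n : ℕ) (y : Y), π ((⇑S.phi.symm)^[n] y) = (⇑T.phi.symm)^[n] (π y) :=
    fun n y => (Function.Semiconj.iterate_right hsemi' n) y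
  -- expansiveness constant for X
  obtain ⟨ε₀, hε₀pos, hexp⟩ := T.expansive_s13
  -- uniform continuity of π
  obtain ⟨δπ, hδπpos, hδπ⟩ := Metric.uniformContinuous_iff.mp
    (CompactSpace.uniformContinuous_of_continuous hcont) ε₀ hε₀pos
  -- η : target closeness for bracket points
  set η := min (δπ/2) S.eps with hη
  have hηpos : 0 < η := lt_min (by linarith) S.eps_pos
  have hηeps : η ≤ S.eps := min_le_right _ _
  have hηδπ : η < δπ := lt_of_le_of_lt (min_le_left _ _) (by linarith)
  -- uniform continuity of the bracket of Y
  have hK : IsCompact {p : Y × Y | dist p.1 p.2 ≤ S.eps} :=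
    (isClosed_le (by fun_prop) continuous_const).isCompact
  obtain ⟨δB, hδBpos, hδB⟩ := Metric.uniformContinuousOn_iff.mp
    (hK.uniformContinuousOn_of_continuous S.bracket_cont) η hηpos
  -- the separation constant
  set δ := min δB S.eps with hδdef
  have hδpos : 0 < δ := lt_min hδBpos S.eps_pos
  have hδeps : δ ≤ S.eps := min_le_right _ _
  have hδδB : δ ≤ δB := min_le_left _ _
  -- Key step: two fibre points at distance < δ satisfy `bracket u v = u`.
  have keyA : ∀ u v : Y, π u = π v → dist u v < δ → S.bracket u v = u := by
    intro u v hπuv hduv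
    set z := S.bracket u v with hz
    have hmemuv : (u, v) ∈ {p : Y × Y | dist p.1 p.2 ≤ S.eps} := (hduv.le.trans hδeps)
    have hmemuu : (u, u) ∈ {p : Y × Y | dist p.1 p.2 ≤ S.eps} := by simp [S.eps_pos.le]
    have hmemvv : (v, v) ∈ {p : Y × Y | dist p.1 p.2 ≤ S.eps} := by simp [S.eps_pos.le]
    have hduz : dist u z < η := by
      have := hδB _ hmemuv _ hmemuu (by
        rw [Prod.dist_eq]; simp only [dist_self]
        rw [sup_eq_right.mpr dist_nonneg, dist_comm]
        exact lt_of_lt_of_le hduv hδδB)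
      rw [S.bracket_self] at this
      rw [dist_comm]
      exact this
    have hdvz : dist v z < η := by
      have := hδB _ hmemuv _ hmemvv (by
        rw [Prod.dist_eq]; simp only [dist_self]
        rw [sup_eq_left.mpr dist_nonneg]
        exact lt_of_lt_of_le hduv hδδB)
      rw [S.bracket_self] at this
      rw [dist_comm]
      exact this
    have hduv_eps : dist u v ≤ S.eps := hduv.le.trans hδeps
    have hbz1 : S.bracket u z = z := by
      rw [hz]
      exact S.bracket_eq₁ u u v (by simp [S.eps_pos.le]) hduv_eps hduv_eps
    have hbz2 : S.bracket z v = z := by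
      rw [hz]
      exact S.bracket_eq₂ u v v hduv_eps (by simp [S.eps_pos.le]) hduv_eps
    -- forward contraction between u and z
    have hfwd := fun n => S.iter_s (hduz.le.trans hηeps) hbz1 n
    -- backward contraction between z and v
    have hbwd := fun n => S.iter_u ((by rwa [dist_comm] at hdvz : dist z v < η).le.trans hηeps)
      hbz2 n
    -- π z = π u via expansiveness
    have hπz : π z = π u := by
      refine hexp (π z) (π u) ?_ ?_
      · intro n
        rw [← hsemiN n z, ← hsemiN n u]
        refine le_of_lt (hδπ ?_)
        rw [dist_comm]
        calc dist ((⇑S.phi)^[n] u) ((⇑S.phi)^[n] z) ≤ S.lam ^ n * dist u z := (hfwd n).1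
        _ ≤ 1 * dist u z := mul_le_mul_of_nonneg_right (S.pow_lam_le_one_s13 n) dist_nonneg
        _ = dist u z := one_mul _
        _ < δπ := lt_trans hduz hηδπ
      · intro n
        rw [← hsemiN' n z, hπuv, ← hsemiN' n v]
        refine le_of_lt (hδπ ?_)
        calc dist ((⇑S.phi.symm)^[n] z) ((⇑S.phi.symm)^[n] v) ≤ S.lam ^ n * dist z v :=
          (hbwd n).1
        _ ≤ 1 * dist z v := mul_le_mul_of_nonneg_right (S.pow_lam_le_one_s13 n) dist_nonneg
        _ = dist z v := one_mul _
        _ < δπ := lt_trans (by rwa [dist_comm] at hdvz) hηδπ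
    -- z is stably equivalent to u
    have hstab : StableEquiv (⇑S.phi) u z := by
      refine squeeze_zero (fun n => dist_nonneg) (fun n => (hfwd n).1) ?_
      simpa using (tendsto_pow_atTop_nhds_zero_of_lt_one S.lam_pos.le
        S.lam_lt_one).mul_const (dist u z)
    exact hinj u hstab (stableEquiv_refl' (⇑S.phi) u) hπz
  -- a finite δ/2-net for Y
  obtain ⟨t, htfin, htcov⟩ := Metric.totallyBounded_iff.mp
    ((isCompact_univ : IsCompact (Set.univ : Set Y)).totallyBounded) (δ/2) (by linarith)
  set F := htfin.toFinset with hF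
  have hFcov : ∀ y : Y, ∃ c ∈ F, dist y c < δ/2 := by
    intro y
    have : y ∈ ⋃ c ∈ t, Metric.ball c (δ/2) := htcov (Set.mem_univ y)
    simp only [Set.mem_iUnion, Metric.mem_ball] at this
    obtain ⟨c, hc, hdc⟩ := this
    exact ⟨c, htfin.mem_toFinset.mpr hc, hdc⟩
  -- the uniform bound
  refine ⟨max F.card 1, le_max_right _ _, ?_⟩
  -- any finite subset of any fibre has cardinality ≤ max F.card 1
  have hbound : ∀ (x : X) (G : Finset Y), ↑G ⊆ π ⁻¹' {x} → G.card ≤ max F.card 1 := by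
    intro x G hG
    by_contra hcard
    push_neg at hcard
    have hFG : F.card < G.card := lt_of_le_of_lt (le_max_left _ _) hcard
    -- for every n there are two distinct points of G that are λ^n δ-close
    have key : ∀ n : ℕ, ∃ a ∈ G, ∃ b ∈ G, a ≠ b ∧ dist a b ≤ S.lam ^ n * δ := by
      intro n
      set f : Y → Y := fun y => (hFcov ((⇑S.phi)^[n] y)).choose with hf
      have hfmem : ∀ y ∈ G, f y ∈ F := fun y _ => (hFcov ((⇑S.phi)^[n] y)).choose_spec.1
      obtain ⟨a, haG, b, hbG, hab, hfab⟩ :=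
        Finset.exists_ne_map_eq_of_card_lt_of_maps_to hFG hfmem
      refine ⟨a, haG, b, hbG, hab, ?_⟩
      have hda : dist ((⇑S.phi)^[n] a) (f a) < δ/2 :=
        (hFcov ((⇑S.phi)^[n] a)).choose_spec.2
      have hdb : dist ((⇑S.phi)^[n] b) (f b) < δ/2 :=
        (hFcov ((⇑S.phi)^[n] b)).choose_spec.2
      have hdn : dist ((⇑S.phi)^[n] a) ((⇑S.phi)^[n] b) < δ := by
        calc dist ((⇑S.phi)^[n] a) ((⇑S.phi)^[n] b)
            ≤ dist ((⇑S.phi)^[n] a) (f a) + dist (f a) ((⇑S.phi)^[n] b) := dist_triangle _ _ _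
        _ = dist ((⇑S.phi)^[n] a) (f a) + dist ((⇑S.phi)^[n] b) (f b) := by
            rw [hfab, dist_comm (f b)]
        _ < δ/2 + δ/2 := add_lt_add hda hdb
        _ = δ := by ring
      have hπn : π ((⇑S.phi)^[n] a) = π ((⇑S.phi)^[n] b) := by
        rw [hsemiN n a, hsemiN n b]
        have ha' : π a = x := hG haG
        have hb' : π b = x := hG hbG
        rw [ha', hb']
      have hbr := keyA _ _ hπn hdn
      have := (S.iter_u (hdn.le.trans hδeps) hbr n).1
      rw [Function.LeftInverse.iterate S.phi.symm_apply_apply n,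
        Function.LeftInverse.iterate S.phi.symm_apply_apply n] at this
      exact this.trans (mul_le_mul_of_nonneg_left hdn.le (pow_nonneg S.lam_pos.le n))
    -- take the minimal distance between distinct points of G
    have hGne : ∃ a ∈ G, ∃ b ∈ G, a ≠ b := by
      obtain ⟨a, haG, b, hbG, hab, _⟩ := key 0
      exact ⟨a, haG, b, hbG, hab⟩
    set E := (G ×ˢ G).filter (fun p => p.1 ≠ p.2) with hE
    have hEne : E.Nonempty := by
      obtain ⟨a, haG, b, hbG, hab⟩ := hGne
      exact ⟨(a, b), Finset.mem_filter.mpr ⟨Finset.mem_product.mpr ⟨haG, hbG⟩, hab⟩⟩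
    set μ := E.inf' hEne (fun p => dist p.1 p.2) with hμ
    have hμpos : 0 < μ := by
      rw [hμ, Finset.lt_inf'_iff]
      intro p hp
      exact dist_pos.mpr (Finset.mem_filter.mp hp).2
    have hμle : ∀ n : ℕ, μ ≤ S.lam ^ n * δ := by
      intro n
      obtain ⟨a, haG, b, hbG, hab, hd⟩ := key n
      have hmem : (a, b) ∈ E := Finset.mem_filter.mpr ⟨Finset.mem_product.mpr ⟨haG, hbG⟩, hab⟩
      exact le_trans (Finset.inf'_le (fun p => dist p.1 p.2) hmem) hd
    have : μ ≤ 0 := by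
      refine ge_of_tendsto (x := (atTop : Filter ℕ)) ?_ (Eventually.of_forall hμle)
      simpa using (tendsto_pow_atTop_nhds_zero_of_lt_one S.lam_pos.le
        S.lam_lt_one).mul_const δ
    linarith
  -- conclude
  intro x
  have hfin : (π ⁻¹' {x}).Finite := by
    by_contra hinf
    obtain ⟨G, hGsub, hGcard⟩ :=
      Set.Infinite.exists_subset_card_eq hinf (max F.card 1 + 1)
    have := hbound x G hGsub
    omega
  refine ⟨hfin, ?_⟩
  have hcard : Nat.card (π ⁻¹' {x}) = hfin.toFinset.card := by
    rw [Nat.card_coe_set_eq, ← Set.ncard_coe_finset, hfin.coe_toFinset]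
  rw [hcard]
  exact hbound x hfin.toFinset (by simp)

end FiniteToOneHelpers

/-- The time-reversal of a Smale space: invert the map and swap the bracket. -/
def SmaleSpace.flip {Z : Type} [MetricSpace Z] (S : SmaleSpace Z) : SmaleSpace Z where
  compact := S.compact
  phi := S.phi.symm
  eps := S.eps
  eps_pos := S.eps_pos
  lam := S.lam
  lam_pos := S.lam_pos
  lam_lt_one := S.lam_lt_one
  bracket := fun x y => S.bracket y x
  bracket_cont := by
    have h : (fun p : Z × Z => S.bracket p.2 p.1) =
        (fun p : Z × Z => S.bracket p.1 p.2) ∘ Prod.swap := rfl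
    rw [h]
    refine S.bracket_cont.comp continuous_swap.continuousOn ?_
    intro p hp
    simpa [dist_comm] using hp
  bracket_self := S.bracket_self
  bracket_eq₁ := fun x y z h1 h2 h3 =>
    S.bracket_eq₂ z y x (by rwa [dist_comm]) (by rwa [dist_comm]) (by rwa [dist_comm])
  bracket_eq₂ := fun x y z h1 h2 h3 =>
    S.bracket_eq₁ z y x (by rwa [dist_comm]) (by rwa [dist_comm]) (by rwa [dist_comm])
  bracket_phi := fun x y h1 h2 => by
    have hA : dist (S.phi.symm y) (S.phi.symm x) ≤ S.eps := by rwa [dist_comm] at h2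
    have hB : dist (S.phi (S.phi.symm y)) (S.phi (S.phi.symm x)) ≤ S.eps := by
      rw [Homeomorph.apply_symm_apply, Homeomorph.apply_symm_apply]
      rwa [dist_comm]
    have h := S.bracket_phi (S.phi.symm y) (S.phi.symm x) hA hB
    rw [Homeomorph.apply_symm_apply, Homeomorph.apply_symm_apply] at h
    exact S.phi.injective (by rw [Homeomorph.apply_symm_apply, h])
  contract_s := fun x y z h1 h2 h3 h4 => S.contract_u x y z h1 h2 h3 h4
  contract_u := fun x y z h1 h2 h3 h4 => by
    have h := S.contract_s x y z h1 h2 h3 h4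
    simpa [Homeomorph.symm_symm] using h

/-- Every `s`-bijective or `u`-bijective factor map between Smale spaces is
finite-to-one, with a uniform bound on the cardinality of the fibres. -/
theorem sbij_or_ubij_is_uniformly_finite_to_one {Y X : Type} [MetricSpace Y] [MetricSpace X]
    (S : SmaleSpace Y) (T : SmaleSpace X) (π : Y → X)
    (hπ : IsSBij S.phi T.phi π ∨ IsUBij S.phi T.phi π) :
    ∃ N : ℕ, 1 ≤ N ∧ ∀ x : X, (π ⁻¹' {x}).Finite ∧ Nat.card (π ⁻¹' {x}) ≤ N := by
  rcases hπ with h | h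
  · exact main_resolving S T π h.continuous h.semiconj (fun y => (h.bij y).injOn)
  · refine main_resolving S.flip T.flip π h.continuous ?_ ?_
    · intro y
      have hs := h.semiconj (S.phi.symm y)
      rw [Homeomorph.apply_symm_apply] at hs
      show π (S.phi.symm y) = T.phi.symm (π y)
      rw [hs, Homeomorph.symm_apply_apply]
    · intro y
      exact (h.bij y).injOn
end
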